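/- For every real α > 0, every real t ≥ 0, and every real λ, the characteristic function of the fractional Poisson distribution with parameter t satisfies ∑_{n=0}^∞ e^{iλn} (t^n / n!) E_α^{(n)}(−t) = E_α( t (e^{iλ} − 1) ). -/

import Mathlib

open MeasureTheory Complex

/-- The Mittag-Leffler function `E_α(z) = ∑ₙ zⁿ / Γ(αn+1)`. -/
noncomputable def mittagLeffler (α : ℝ) (z : ℂ) : ℂ :=
  ∑' n : ℕ, z ^ n / (Real.Gamma (α * n + 1) : ℂ)

lemma ml_summable (α : ℝ) (hα : 0 < α) (r : NNReal) :
    Summable fun n : ℕ => (Real.Gamma (α * n + 1))⁻¹ * (r : ℝ) ^ n := by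
  set K : ℝ := 2 * r + 1 with hKdef
  have hK1 : (1 : ℝ) ≤ K := by have := r.coe_nonneg; linarith
  set q : ℕ := Nat.ceil (2 / α) + 1 with hqdef
  have hq0 : 0 < q := Nat.succ_pos _
  have hqα : 2 / α ≤ q := le_trans (Nat.le_ceil _) (by exact_mod_cast Nat.le_succ _)
  set C : ℝ := K ^ q with hCdef
  -- eventually C^j ≤ j!
  have hfac : ∀ᶠ j : ℕ in Filter.atTop, C ^ j ≤ ((Nat.factorial j : ℕ) : ℝ) := by
    have h0 := FloorSemiring.tendsto_pow_div_factorial_atTop (K := ℝ) C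
    have h1 := h0.eventually (gt_mem_nhds (show (0:ℝ) < 1 by norm_num))
    filter_upwards [h1] with j hj
    have hjpos : (0 : ℝ) < ((Nat.factorial j : ℕ) : ℝ) := by positivity
    calc C ^ j = C ^ j / ((Nat.factorial j : ℕ) : ℝ) * ((Nat.factorial j : ℕ) : ℝ) := by field_simp
    _ ≤ 1 * ((Nat.factorial j : ℕ) : ℝ) := by
        apply mul_le_mul_of_nonneg_right (le_of_lt hj) hjpos.le
    _ = ((Nat.factorial j : ℕ) : ℝ) := one_mul _
  obtain ⟨J, hJ⟩ := hfac.exists_forall_of_atTop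
  -- α * n tends to infinity
  have htend : Filter.Tendsto (fun n : ℕ => α * n) Filter.atTop Filter.atTop := by
    exact Filter.Tendsto.const_mul_atTop hα tendsto_natCast_atTop_atTop
  have hev : ∀ᶠ n : ℕ in Filter.atTop,
      (Real.Gamma (α * n + 1))⁻¹ * (r : ℝ) ^ n ≤ (1 / 2 : ℝ) ^ n := by
    filter_upwards [htend.eventually_ge_atTop (2 : ℝ),
      htend.eventually_ge_atTop ((J : ℝ) + 1)] with n h2 hJn
    set j : ℕ := Nat.floor (α * n) with hjdef
    have hαn0 : (0 : ℝ) ≤ α * n := le_trans (by norm_num) h2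
    have hj1 : 1 ≤ j := Nat.le_floor (by exact_mod_cast le_trans (by norm_num) h2)
    have hjJ : J ≤ j := Nat.le_floor (by linarith)
    -- j! ≤ Γ(αn+1)
    have hmono := Real.Gamma_strictMonoOn_Ici.monotoneOn
    have hjle : (j : ℝ) ≤ α * n := Nat.floor_le hαn0
    have hfacle : ((Nat.factorial j) : ℝ) ≤ Real.Gamma (α * n + 1) := by
      have := hmono (a := (j : ℝ) + 1) (b := α * n + 1)
        (by simp only [Set.mem_Ici]; exact_mod_cast Nat.succ_le_succ hj1) (by simp [Set.mem_Ici]; linarith)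
        (by linarith)
      rwa [Real.Gamma_nat_eq_factorial] at this
    -- K^n ≤ C^j ≤ j!
    have hnqj : n ≤ q * j := by
      have h1 : (n : ℝ) / q ≤ (j : ℝ) := by
        have hfl : α * n - 1 ≤ (j : ℝ) := by
          have := Nat.lt_floor_add_one (α * n); linarith
        have h3 : α * n / 2 ≤ α * n - 1 := by linarith
        have h4 : (n : ℝ) / q ≤ α * n / 2 := by
          rw [div_le_div_iff₀ (by exact_mod_cast hq0) (by norm_num)]
          have : 2 / α ≤ (q : ℝ) := hqα
          have hn0 : (0 : ℝ) ≤ n := Nat.cast_nonneg n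
          rw [div_le_iff₀ hα] at this
          nlinarith
        linarith
      have : (n : ℝ) ≤ (q : ℝ) * j := by
        rw [div_le_iff₀ (by exact_mod_cast hq0)] at h1; linarith
      exact_mod_cast this
    have hKn : K ^ n ≤ Real.Gamma (α * n + 1) := by
      calc K ^ n ≤ K ^ (q * j) := pow_le_pow_right₀ hK1 hnqj
      _ = C ^ j := by rw [hCdef, ← pow_mul]
      _ ≤ ((Nat.factorial j : ℕ) : ℝ) := hJ j hjJ
      _ ≤ _ := hfacle
    have hKpos : (0 : ℝ) < K ^ n := by positivity
    have hΓpos : (0 : ℝ) < Real.Gamma (α * n + 1) := Real.Gamma_pos_of_pos (by linarith)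
    have : (Real.Gamma (α * n + 1))⁻¹ ≤ (K ^ n)⁻¹ := by
      exact inv_anti₀ hKpos hKn
    calc (Real.Gamma (α * n + 1))⁻¹ * (r : ℝ) ^ n ≤ (K ^ n)⁻¹ * (r : ℝ) ^ n := by
          apply mul_le_mul_of_nonneg_right this (by positivity)
    _ = ((r : ℝ) / K) ^ n := by rw [div_pow]; ring
    _ ≤ (1 / 2 : ℝ) ^ n := by
        apply pow_le_pow_left₀ (by positivity)
        rw [div_le_div_iff₀ (by positivity) (by norm_num)]
        simp only [hKdef]; nlinarith [r.coe_nonneg]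
  apply summable_of_isBigO_nat (summable_geometric_of_lt_one (by norm_num) (by norm_num : (1/2 : ℝ) < 1))
  rw [Asymptotics.isBigO_iff]
  refine ⟨1, ?_⟩
  filter_upwards [hev, htend.eventually_ge_atTop (0 : ℝ)] with n hn h0
  have hΓpos : (0 : ℝ) < Real.Gamma (α * n + 1) := Real.Gamma_pos_of_pos (by linarith)
  simp only [Real.norm_eq_abs, one_mul]
  rw [_root_.abs_of_nonneg (by positivity : (0:ℝ) ≤ (Real.Gamma (α * n + 1))⁻¹ * (r:ℝ) ^ n),
    _root_.abs_of_nonneg (by positivity : (0:ℝ) ≤ (1/2:ℝ) ^ n)]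
  exact hn

open FormalMultilinearSeries in
lemma mittagLeffler_differentiable (α : ℝ) (hα : 0 < α) :
    Differentiable ℂ (mittagLeffler α) := by
  set c : ℕ → ℂ := fun n => ((Real.Gamma (α * n + 1) : ℝ) : ℂ)⁻¹ with hc
  set p := ofScalars ℂ c with hp
  have hnorm : ∀ n, ‖p n‖ = (Real.Gamma (α * n + 1))⁻¹ := by
    intro n
    rw [hp, ofScalars_norm, hc]
    simp [Complex.norm_real, _root_.abs_of_nonneg
      (Real.Gamma_nonneg_of_nonneg (by positivity : (0:ℝ) ≤ α * n + 1))]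
  have hrad : p.radius = ⊤ := by
    apply p.radius_eq_top_of_summable_norm
    intro r
    have := ml_summable α hα r
    simpa [hnorm] using this
  have hball := p.hasFPowerSeriesOnBall (by rw [hrad]; simp)
  rw [hrad] at hball
  have hsum : mittagLeffler α = p.sum := by
    funext z
    rw [mittagLeffler, FormalMultilinearSeries.sum]
    refine tsum_congr fun n => ?_
    rw [hp, ofScalars_apply_eq, hc, smul_eq_mul, div_eq_inv_mul]
  rw [hsum]
  exact fun z => hball.differentiableOn.differentiableAt
    (EMetric.isOpen_ball.mem_nhds (EMetric.mem_ball.mpr (edist_lt_top z 0)))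

/-- For every `α > 0`, `t ≥ 0` and real `λ`, the characteristic function of the
fractional Poisson distribution with parameter `t` satisfies
`∑ₙ e^{iλn} (tⁿ/n!) E_α⁽ⁿ⁾(−t) = E_α(t(e^{iλ} − 1))`. -/
theorem fractional_poisson_characteristic_function
    (α : ℝ) (hα : 0 < α) (t : ℝ) (ht : 0 ≤ t) (l : ℝ) :
    HasSum
      (fun n : ℕ => Complex.exp (Complex.I * (l : ℂ) * (n : ℂ)) *
        ((t : ℂ) ^ n / (Nat.factorial n : ℂ)) * iteratedDeriv n (mittagLeffler α) (-(t : ℂ)))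
      (mittagLeffler α ((t : ℂ) * (Complex.exp (Complex.I * (l : ℂ)) - 1))) := by
  have hd := mittagLeffler_differentiable α hα
  have H := Complex.hasSum_taylorSeries_of_entire hd (-(t : ℂ))
    ((t : ℂ) * (Complex.exp (Complex.I * (l : ℂ)) - 1))
  convert H using 2 with n
  · rfl
  have hz : (t : ℂ) * (Complex.exp (Complex.I * (l : ℂ)) - 1) - (-(t : ℂ))
      = (t : ℂ) * Complex.exp (Complex.I * (l : ℂ)) := by ring
  rw [hz, smul_eq_mul, smul_eq_mul, mul_pow,
    show Complex.I * (l : ℂ) * (n : ℂ) = (n : ℂ) * (Complex.I * (l : ℂ)) by ring,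
    Complex.exp_nat_mul]
  ring
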